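/- Let G be a finite graph, r, ℓ natural numbers, A ⊆ V(G) \ X, X ⊆ V(G), and S, S' two (possibly equal) subsets of V(G) such that (1) every path from a vertex of X to a vertex of V(G) \ X intersects S ∪ S', and (2) any two vertices of S are at distance at most ℓ in G, and any two vertices of S' are at distance at most ℓ in G. Then the number of distinct r-profiles with respect to A of vertices of X is at most (r+2)^2 · (ℓ+1)^{|A|}. -/

import Mathlib

open SimpleGraph

noncomputable def rProfile {V : Type*} (G : SimpleGraph V) (r : ℕ) (A : Set V) (v : V) :
    A → ℕ∞ :=
  fun a => if G.edist v a ≤ r then G.edist v a else ⊤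

/-- if `S ∪ S'` meets every path from `X` to `V(G) \ X`, and `S` (resp. `S'`)
has `G`-diameter at most `ℓ`, then the vertices of `X` have at most `(r+2)²·(ℓ+1)^|A|`
distinct `r`-profiles with respect to `A ⊆ V(G) \ X`. -/

theorem profiles_of_two_sets_separated {V : Type*} [Fintype V] (G : SimpleGraph V)
    (r ℓ : ℕ) (A X S S' : Set V) (hA : A ⊆ Xᶜ)
    (hsep : ∀ x ∈ X, ∀ y ∉ X, ∀ w : G.Walk x y, w.IsPath →
      ∃ s ∈ S ∪ S', s ∈ w.support)
    (hS : ∀ u ∈ S, ∀ v ∈ S, G.edist u v ≤ ℓ)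
    (hS' : ∀ u ∈ S', ∀ v ∈ S', G.edist u v ≤ ℓ) :
    (rProfile G r A '' X).ncard ≤ (r + 2) ^ 2 * (ℓ + 1) ^ A.ncard := by
  classical
  set m : V → ℕ∞ := fun x => ⨅ s ∈ S, G.edist x s with hm
  set m' : V → ℕ∞ := fun x => ⨅ s ∈ S', G.edist x s with hm'
  set e : V → ℕ∞ := fun a => ⨅ s ∈ S, G.edist s a with he
  set e' : V → ℕ∞ := fun a => ⨅ s ∈ S', G.edist s a with he'
  set μ : V → V → ℕ∞ := fun x a => min (m x + e a) (m' x + e' a) with hμdef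
  have hμxa : ∀ x a : V, μ x a = min (m x + e a) (m' x + e' a) := fun x a => by
    simp only [hμdef]
  -- separation lower bound
  have hlow : ∀ x ∈ X, ∀ a : A, μ x a ≤ G.edist x (a : V) := by
    intro x hx a
    by_cases htop : G.edist x (a : V) = ⊤
    · exact htop ▸ le_top
    · obtain ⟨p, hp⟩ := exists_walk_of_edist_ne_top htop
      have haX : (a : V) ∉ X := hA a.2
      obtain ⟨s, hsS, hss⟩ := hsep x hx a haX p.bypass p.bypass_isPath
      have h1 : G.edist x s ≤ (p.bypass.takeUntil s hss).length := edist_le _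
      have h2 : G.edist s (a : V) ≤ (p.bypass.dropUntil s hss).length := edist_le _
      have hlen : (p.bypass.takeUntil s hss).length + (p.bypass.dropUntil s hss).length
          = p.bypass.length := by
        rw [← Walk.length_append, Walk.take_spec]
      have h3 : G.edist x s + G.edist s (a : V) ≤ G.edist x (a : V) := by
        calc G.edist x s + G.edist s (a : V)
            ≤ ((p.bypass.takeUntil s hss).length : ℕ∞) + (p.bypass.dropUntil s hss).length :=
              add_le_add h1 h2
          _ = (p.bypass.length : ℕ∞) := by exact_mod_cast hlen
          _ ≤ (p.length : ℕ∞) := by exact_mod_cast Walk.length_bypass_le p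
          _ = G.edist x (a : V) := hp
      rw [hμxa]
      cases hsS with
      | inl hsS =>
          refine le_trans (min_le_left _ _) (le_trans ?_ h3)
          exact add_le_add (iInf₂_le s hsS) (iInf₂_le s hsS)
      | inr hsS =>
          refine le_trans (min_le_right _ _) (le_trans ?_ h3)
          exact add_le_add (iInf₂_le s hsS) (iInf₂_le s hsS)
  -- upper bound via diameter, generic in the set
  have hup0 : ∀ (T : Set V), (∀ u ∈ T, ∀ v ∈ T, G.edist u v ≤ ℓ) → ∀ x a : V,
      G.edist x a ≤ (⨅ s ∈ T, G.edist x s) + (⨅ s ∈ T, G.edist s a) + ℓ := by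
    intro T hT x a
    by_cases hne : T.Nonempty
    · obtain ⟨s₁, hs₁, hmin₁⟩ := Set.exists_min_image T (fun s => G.edist x s) T.toFinite hne
      obtain ⟨s₂, hs₂, hmin₂⟩ := Set.exists_min_image T (fun s => G.edist s a) T.toFinite hne
      have h1 : G.edist x s₁ ≤ ⨅ s ∈ T, G.edist x s := le_iInf₂ hmin₁
      have h2 : G.edist s₂ a ≤ ⨅ s ∈ T, G.edist s a := le_iInf₂ hmin₂
      calc G.edist x a ≤ G.edist x s₁ + G.edist s₁ a := SimpleGraph.edist_triangle
        _ ≤ G.edist x s₁ + (G.edist s₁ s₂ + G.edist s₂ a) :=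
            add_le_add le_rfl SimpleGraph.edist_triangle
        _ ≤ (⨅ s ∈ T, G.edist x s) + ((ℓ : ℕ∞) + (⨅ s ∈ T, G.edist s a)) :=
            add_le_add h1 (add_le_add (hT s₁ hs₁ s₂ hs₂) h2)
        _ = (⨅ s ∈ T, G.edist x s) + (⨅ s ∈ T, G.edist s a) + ℓ := by
            rw [add_assoc, add_comm (ℓ : ℕ∞)]
    · rw [Set.not_nonempty_iff_eq_empty] at hne
      subst hne
      simp
  have hup : ∀ (x : V) (a : A), G.edist x (a : V) ≤ μ x (a : V) + ℓ := by
    intro x a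
    have h1 := hup0 S hS x a
    have h2 := hup0 S' hS' x a
    rw [hμxa]
    rcases min_cases (m x + e (a : V)) (m' x + e' (a : V)) with ⟨h, _⟩ | ⟨h, _⟩ <;> rw [h]
    · exact h1
    · exact h2
  -- toNat bound helper
  have htn : ∀ (n : ℕ∞) (k : ℕ), n ≤ (k : ℕ∞) → n.toNat < k + 1 := by
    intro n k h
    have h2 := ENat.toNat_le_toNat h (by simp)
    simp only [ENat.toNat_coe] at h2
    omega
  have hδle : ∀ (x : V) (a : A),
      (if μ x (a : V) ≤ (r : ℕ∞) then G.edist x (a : V) - μ x (a : V) else 0) ≤ (ℓ : ℕ∞) := by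
    intro x a
    split
    · exact tsub_le_iff_right.mpr (by rw [add_comm]; exact hup x a)
    · simp
  -- encoding and decoding
  set T : Type _ := Fin (r + 2) × Fin (r + 2) × (A → Fin (ℓ + 1)) with hT
  set E : V → T := fun x =>
    (⟨(min (m x) ((r + 1 : ℕ) : ℕ∞)).toNat, htn _ _ (min_le_right _ _)⟩,
     ⟨(min (m' x) ((r + 1 : ℕ) : ℕ∞)).toNat, htn _ _ (min_le_right _ _)⟩,
     fun a => ⟨(if μ x (a : V) ≤ (r : ℕ∞) then G.edist x (a : V) - μ x (a : V) else 0).toNat,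
       htn _ _ (hδle x a)⟩) with hE
  set F : T → (A → ℕ∞) := fun p a =>
    if min (if (p.1 : ℕ) ≤ r then ((p.1 : ℕ) : ℕ∞) + e (a : V) else ⊤)
        (if (p.2.1 : ℕ) ≤ r then ((p.2.1 : ℕ) : ℕ∞) + e' (a : V) else ⊤)
        + ((p.2.2 a : ℕ) : ℕ∞) ≤ (r : ℕ∞) then
      min (if (p.1 : ℕ) ≤ r then ((p.1 : ℕ) : ℕ∞) + e (a : V) else ⊤)
        (if (p.2.1 : ℕ) ≤ r then ((p.2.1 : ℕ) : ℕ∞) + e' (a : V) else ⊤)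
        + ((p.2.2 a : ℕ) : ℕ∞)
    else ⊤ with hF
  -- branch computation
  have hbr : ∀ (n c : ℕ∞),
      (if (min n ((r + 1 : ℕ) : ℕ∞)).toNat ≤ r then (((min n ((r + 1 : ℕ) : ℕ∞)).toNat : ℕ) : ℕ∞) + c else ⊤)
      = (if n ≤ (r : ℕ∞) then n + c else ⊤) := by
    intro n c
    cases n with
    | top =>
        have h1 : min (⊤ : ℕ∞) ((r + 1 : ℕ) : ℕ∞) = ((r + 1 : ℕ) : ℕ∞) := min_eq_right le_top
        rw [h1]
        simp only [ENat.toNat_coe]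
        rw [if_neg (by omega), if_neg (by simp)]
    | coe n =>
        by_cases h : n ≤ r
        · have h1 : min ((n : ℕ∞)) ((r + 1 : ℕ) : ℕ∞) = (n : ℕ∞) :=
            min_eq_left (by exact_mod_cast Nat.le_succ_of_le h)
          rw [h1]
          simp only [ENat.toNat_coe]
          rw [if_pos h, if_pos (by exact_mod_cast h)]
        · have h1 : min ((n : ℕ∞)) ((r + 1 : ℕ) : ℕ∞) = ((r + 1 : ℕ) : ℕ∞) :=
            min_eq_right (by exact_mod_cast (by omega : r + 1 ≤ n))
          rw [h1]
          simp only [ENat.toNat_coe]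
          rw [if_neg (by omega), if_neg (by exact_mod_cast h)]
  -- main pointwise identity
  have hmain : ∀ x ∈ X, rProfile G r A x = F (E x) := by
    intro x hx
    funext a
    have hFa : F (E x) a =
        if min (if m x ≤ (r : ℕ∞) then m x + e (a : V) else ⊤)
            (if m' x ≤ (r : ℕ∞) then m' x + e' (a : V) else ⊤)
            + ((if μ x (a : V) ≤ (r : ℕ∞) then G.edist x (a : V) - μ x (a : V) else 0).toNat : ℕ∞)
            ≤ (r : ℕ∞) then
          min (if m x ≤ (r : ℕ∞) then m x + e (a : V) else ⊤)
            (if m' x ≤ (r : ℕ∞) then m' x + e' (a : V) else ⊤)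
            + ((if μ x (a : V) ≤ (r : ℕ∞) then G.edist x (a : V) - μ x (a : V) else 0).toNat : ℕ∞)
        else ⊤ := by
      simp only [hF, hE]
      rw [hbr (m x) (e (a : V)), hbr (m' x) (e' (a : V))]
    have hδcoe : ((if μ x (a : V) ≤ (r : ℕ∞) then G.edist x (a : V) - μ x (a : V) else 0).toNat : ℕ∞)
        = (if μ x (a : V) ≤ (r : ℕ∞) then G.edist x (a : V) - μ x (a : V) else 0) :=
      ENat.coe_toNat (fun h => by
        have := hδle x a
        rw [h] at this
        simp at this)
    rw [hFa, hδcoe]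
    have hνμ : μ x (a : V) ≤ min (if m x ≤ (r : ℕ∞) then m x + e (a : V) else ⊤)
        (if m' x ≤ (r : ℕ∞) then m' x + e' (a : V) else ⊤) := by
      refine le_min ?_ ?_ <;> split
      · exact (hμxa x a) ▸ min_le_left _ _
      · exact le_top
      · exact (hμxa x a) ▸ min_le_right _ _
      · exact le_top
    have hrp : rProfile G r A x a = if G.edist x (a : V) ≤ (r : ℕ∞) then G.edist x (a : V) else ⊤ :=
      rfl
    by_cases hμr : μ x (a : V) ≤ (r : ℕ∞)
    · rw [if_pos hμr]
      have hνeq : min (if m x ≤ (r : ℕ∞) then m x + e (a : V) else ⊤)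
          (if m' x ≤ (r : ℕ∞) then m' x + e' (a : V) else ⊤) = μ x (a : V) := by
        refine le_antisymm ?_ hνμ
        rcases min_cases (m x + e (a : V)) (m' x + e' (a : V)) with ⟨hmin, _⟩ | ⟨hmin, _⟩
        · have hμeq : μ x (a : V) = m x + e (a : V) := by rw [hμxa, hmin]
          have hmr : m x ≤ (r : ℕ∞) := le_trans (le_trans le_self_add hμeq.ge) hμr
          refine le_trans (min_le_left _ _) ?_
          rw [if_pos hmr, hμeq]
        · have hμeq : μ x (a : V) = m' x + e' (a : V) := by rw [hμxa, hmin]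
          have hmr : m' x ≤ (r : ℕ∞) := le_trans (le_trans le_self_add hμeq.ge) hμr
          refine le_trans (min_le_right _ _) ?_
          rw [if_pos hmr, hμeq]
      rw [hνeq, add_tsub_cancel_of_le (hlow x hx a), hrp]
    · rw [if_neg hμr, add_zero, hrp]
      have hd : ¬ G.edist x (a : V) ≤ (r : ℕ∞) := fun h => hμr (le_trans (hlow x hx a) h)
      have hν : ¬ min (if m x ≤ (r : ℕ∞) then m x + e (a : V) else ⊤)
          (if m' x ≤ (r : ℕ∞) then m' x + e' (a : V) else ⊤) ≤ (r : ℕ∞) :=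
        fun h => hμr (le_trans hνμ h)
      rw [if_neg hd, if_neg hν]
  -- counting
  have hsub : rProfile G r A '' X ⊆ F '' Set.univ := by
    rintro f ⟨x, hx, rfl⟩
    exact ⟨E x, trivial, (hmain x hx).symm⟩
  have hfinT : Finite T := by infer_instance
  have hfin : (Set.univ : Set T).Finite := Set.finite_univ
  calc (rProfile G r A '' X).ncard ≤ (F '' Set.univ).ncard :=
        Set.ncard_le_ncard hsub (hfin.image F)
    _ ≤ (Set.univ : Set T).ncard := Set.ncard_image_le hfin
    _ = Nat.card T := Set.ncard_univ T
    _ = (r + 2) * ((r + 2) * (ℓ + 1) ^ A.ncard) := by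
        rw [hT]
        rw [Nat.card_prod, Nat.card_prod, Nat.card_fun, Nat.card_coe_set_eq]
        simp
    _ = (r + 2) ^ 2 * (ℓ + 1) ^ A.ncard := by ring
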